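/- arXiv:1807.05533 — 2 statements merged into one kernel-verified Lean document; each statement's English description precedes it below -/
import Mathlib

section
/- There exists a measure μ on the measurable space (ℕ, P(ℕ)) (where P(ℕ) is the σ-algebra of all subsets of ℕ) such that (ℕ, P(ℕ), μ) is partitionable: for every sequence (a_n)_{n∈ℕ} of nonnegative real numbers there exists a sequence (A_n)_{n∈ℕ} of pairwise disjoint subsets of ℕ with μ(A_n) = a_n for all n. -/
open MeasureTheory ENNReal NNReal

/-- A measure space is partitionable if every sequence of nonnegative reals is attained as
the measures of a sequence of pairwise disjoint measurable sets. -/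
def Partitionable {Ω : Type*} [MeasurableSpace Ω] (μ : Measure Ω) : Prop :=
  ∀ a : ℕ → ℝ, (∀ n, 0 ≤ a n) → ∃ A : ℕ → Set Ω,
    (∀ n, MeasurableSet (A n)) ∧ (∀ m n, m ≠ n → Disjoint (A m) (A n)) ∧
    ∀ n, μ (A n) = ENNReal.ofReal (a n)

/-- Binary expansion of `y ∈ [0,1)`. -/
lemma exists_digits (y : ℝ) (hy0 : 0 ≤ y) (hy1 : y < 1) :
    ∃ b : ℕ → Bool, HasSum (fun k => if b k then ((2:ℝ)^(k+1))⁻¹ else 0) y := by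
  set d : ℕ → ℕ := fun n => ⌊y * 2 ^ n⌋₊ with hd
  have hdle : ∀ n, (d n : ℝ) ≤ y * 2 ^ n := fun n =>
    Nat.floor_le (by positivity)
  have hdgt : ∀ n, y * 2 ^ n < d n + 1 := fun n => Nat.lt_floor_add_one _
  have hstep : ∀ k, d (k + 1) = 2 * d k ∨ d (k + 1) = 2 * d k + 1 := by
    intro k
    have h1 : 2 * d k ≤ d (k + 1) := by
      apply Nat.le_floor
      push_cast
      calc (2:ℝ) * d k ≤ 2 * (y * 2 ^ k) := by nlinarith [hdle k]
        _ = y * 2 ^ (k+1) := by ring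
    have h2 : d (k + 1) < 2 * d k + 2 := by
      have hk := hdgt k
      have hlt : y * 2 ^ (k+1) < ((2 * d k + 2 : ℕ) : ℝ) := by
        push_cast [pow_succ]; nlinarith
      exact (Nat.floor_lt (by positivity : (0:ℝ) ≤ y * 2 ^ (k+1))).mpr hlt
    omega
  refine ⟨fun k => decide (d (k + 1) = 2 * d k + 1), ?_⟩
  have hterm : ∀ k, (if (decide (d (k + 1) = 2 * d k + 1) : Bool) then ((2:ℝ)^(k+1))⁻¹ else 0)
      = (d (k+1) : ℝ) / 2 ^ (k+1) - (d k : ℝ) / 2 ^ k := by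
    intro k
    rcases hstep k with h | h
    · rw [if_neg (by rw [decide_eq_true_eq]; omega)]
      push_cast [h, pow_succ]
      field_simp
      ring
    · rw [if_pos (by rw [decide_eq_true_eq]; omega)]
      push_cast [h, pow_succ]
      field_simp
      ring
  have hd0 : d 0 = 0 := by
    simp only [hd, pow_zero, mul_one]
    exact Nat.floor_eq_zero.mpr hy1
  have hpart : ∀ n, ∑ k ∈ Finset.range n,
      (if (decide (d (k + 1) = 2 * d k + 1) : Bool) then ((2:ℝ)^(k+1))⁻¹ else 0)
      = (d n : ℝ) / 2 ^ n := by
    intro n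
    rw [Finset.sum_congr rfl fun k _ => hterm k,
      Finset.sum_range_sub (fun n => (d n : ℝ) / 2 ^ n)]
    simp [hd0]
  rw [hasSum_iff_tendsto_nat_of_nonneg (fun k => by positivity)]
  simp only [hpart]
  have hlow : ∀ n, y - ((1:ℝ)/2) ^ n ≤ (d n : ℝ) / 2 ^ n := by
    intro n
    have h1 := hdgt n
    have h2 : (0:ℝ) < 2 ^ n := by positivity
    rw [le_div_iff₀ h2, sub_mul, one_div, inv_pow, inv_mul_cancel₀ h2.ne']
    linarith
  have hhigh : ∀ n, (d n : ℝ) / 2 ^ n ≤ y := by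
    intro n
    rw [div_le_iff₀ (by positivity)]
    exact hdle n
  refine tendsto_of_tendsto_of_tendsto_of_le_of_le ?_ tendsto_const_nhds hlow hhigh
  have : Filter.Tendsto (fun n : ℕ => ((1:ℝ)/2) ^ n) Filter.atTop (nhds 0) :=
    tendsto_pow_atTop_nhds_zero_of_lt_one (by norm_num) (by norm_num)
  simpa using Filter.Tendsto.const_sub y this

/-- `2^z` in `ℝ≥0∞` equals `ofReal` of the real `2^z`. -/
lemma two_zpow_eq (z : ℤ) : (2:ℝ≥0∞) ^ z = ENNReal.ofReal ((2:ℝ) ^ z) := by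
  rw [show (2:ℝ≥0∞) = ((2:ℝ≥0):ℝ≥0∞) by norm_num, ← ENNReal.coe_zpow (by norm_num)]
  rw [ENNReal.ofReal]
  congr 1
  apply NNReal.coe_injective
  rw [Real.coe_toNNReal _ (by positivity)]
  norm_num

/-- Every nonnegative real is a subset-sum of the powers of two `2^z`, `z : ℤ`, in `ℝ≥0∞`. -/
lemma exists_subset_sum (x : ℝ) (hx : 0 ≤ x) :
    ∃ S : Set ℤ, ∑' z : S, (2:ℝ≥0∞) ^ (z : ℤ) = ENNReal.ofReal x := by
  obtain ⟨N, hN⟩ := pow_unbounded_of_one_lt x (by norm_num : (1:ℝ) < 2)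
  have hy0 : 0 ≤ x / 2 ^ N := by positivity
  have hy1 : x / 2 ^ N < 1 := by
    rw [div_lt_one (by positivity)]; exact hN
  obtain ⟨b, hb⟩ := exists_digits (x / 2 ^ N) hy0 hy1
  refine ⟨(fun k : ℕ => (N : ℤ) - (k + 1)) '' {k | b k = true}, ?_⟩
  rw [tsum_image _ (Function.Injective.injOn (by intro a c h; dsimp only at h; omega))]
  have h1 : ∀ k : ({k | b k = true} : Set ℕ), (2:ℝ≥0∞) ^ ((N : ℤ) - ((k:ℕ) + 1))
      = ENNReal.ofReal ((2:ℝ) ^ N * (if b (k:ℕ) then ((2:ℝ)^((k:ℕ)+1))⁻¹ else 0)) := by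
    rintro ⟨k, hk⟩
    simp only [Set.mem_setOf_eq] at hk
    rw [if_pos hk, two_zpow_eq]
    congr 1
    rw [show ((N:ℤ) - ((k:ℤ) + 1)) = (N:ℤ) + (-(((k+1:ℕ)):ℤ)) by push_cast; ring]
    rw [zpow_add₀ (by norm_num : (2:ℝ) ≠ 0), zpow_natCast, zpow_neg, zpow_natCast]
  rw [tsum_congr h1]
  have hsum : Summable (fun k : ℕ => (2:ℝ) ^ N * (if b k then ((2:ℝ)^(k+1))⁻¹ else 0)) :=
    hb.summable.mul_left _
  rw [← ENNReal.ofReal_tsum_of_nonneg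
    (f := fun k : ({k | b k = true} : Set ℕ) =>
      (2:ℝ) ^ N * (if b (k:ℕ) then ((2:ℝ)^((k:ℕ)+1))⁻¹ else 0))
    (fun k => by positivity) (hsum.subtype _)]
  congr 1
  have hsupp : Function.support
      (fun k : ℕ => (2:ℝ) ^ N * (if b k then ((2:ℝ)^(k+1))⁻¹ else 0)) ⊆ {k | b k = true} := by
    intro k hk
    simp only [Function.mem_support, Set.mem_setOf_eq] at hk ⊢
    by_contra h
    rw [Bool.not_eq_true] at h
    rw [h] at hk
    simp at hk
  rw [tsum_subtype_eq_of_support_subset hsupp, _root_.tsum_mul_left, hb.tsum_eq]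
  field_simp

theorem exists_partitionable_measure_on_nat :
    ∃ μ : Measure ℕ, Partitionable μ := by
  let e : ℕ ≃ ℕ × ℤ := (Denumerable.eqv (ℕ × ℤ)).symm
  set w : ℕ → ℝ≥0∞ := fun m => (2:ℝ≥0∞) ^ ((e m).2 : ℤ) with hw
  refine ⟨Measure.sum fun m => w m • Measure.dirac m, ?_⟩
  intro a ha
  choose S hS using fun n => exists_subset_sum (a n) (ha n)
  refine ⟨fun n => e ⁻¹' ({n} ×ˢ S n), fun n => MeasurableSet.of_discrete, ?_, ?_⟩
  · intro m n hmn
    apply Disjoint.preimage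
    rw [Set.disjoint_left]
    rintro ⟨i, z⟩ hp hq
    simp only [Set.mem_prod, Set.mem_singleton_iff] at hp hq
    exact hmn (hp.1 ▸ hq.1 ▸ rfl)
  · intro n
    rw [Measure.sum_apply _ MeasurableSet.of_discrete]
    have h1 : ∀ m, (w m • Measure.dirac m) (e ⁻¹' ({n} ×ˢ S n))
        = Set.indicator (e ⁻¹' ({n} ×ˢ S n)) w m := by
      intro m
      rw [Measure.smul_apply, smul_eq_mul, Measure.dirac_apply]
      by_cases hm : m ∈ e ⁻¹' ({n} ×ˢ S n)
      · rw [Set.indicator_of_mem hm, Set.indicator_of_mem hm, Pi.one_apply, mul_one]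
      · rw [Set.indicator_of_notMem hm, Set.indicator_of_notMem hm, mul_zero]
    rw [tsum_congr h1]
    rw [← Equiv.tsum_eq e.symm (fun m => Set.indicator (e ⁻¹' ({n} ×ˢ S n)) w m)]
    have h2 : ∀ p : ℕ × ℤ, Set.indicator (e ⁻¹' ({n} ×ˢ S n)) w (e.symm p)
        = Set.indicator ({n} ×ˢ S n) (fun p : ℕ × ℤ => (2:ℝ≥0∞) ^ (p.2 : ℤ)) p := by
      intro p
      have hmem : e.symm p ∈ e ⁻¹' ({n} ×ˢ S n) ↔ p ∈ ({n} ×ˢ S n : Set (ℕ × ℤ)) := by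
        rw [Set.mem_preimage, Equiv.apply_symm_apply]
      by_cases hp : p ∈ ({n} ×ˢ S n : Set (ℕ × ℤ))
      · rw [Set.indicator_of_mem (hmem.mpr hp), Set.indicator_of_mem hp, hw]
        simp only [Equiv.apply_symm_apply]
      · rw [Set.indicator_of_notMem (fun h => hp (hmem.mp h)), Set.indicator_of_notMem hp]
    rw [tsum_congr h2]
    rw [show (∑' (p : ℕ × ℤ), ({n} ×ˢ S n).indicator (fun p : ℕ × ℤ => (2:ℝ≥0∞) ^ (p.2 : ℤ)) p)
        = ∑' (i : ℕ) (z : ℤ), ({n} ×ˢ S n).indicator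
            (fun p : ℕ × ℤ => (2:ℝ≥0∞) ^ (p.2 : ℤ)) (i, z)
      from ENNReal.tsum_prod (f := fun i z => ({n} ×ˢ S n).indicator
        (fun p : ℕ × ℤ => (2:ℝ≥0∞) ^ (p.2 : ℤ)) (i, z))]
    have h3 : ∀ i : ℕ, ∑' z : ℤ, Set.indicator ({n} ×ˢ S n)
        (fun p : ℕ × ℤ => (2:ℝ≥0∞) ^ (p.2 : ℤ)) (i, z)
        = if i = n then ENNReal.ofReal (a n) else 0 := by
      intro i
      by_cases hi : i = n
      · subst hi
        rw [if_pos rfl, ← hS i, tsum_subtype (S i) (fun z => (2:ℝ≥0∞) ^ (z : ℤ))]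
        apply tsum_congr
        intro z
        by_cases hz : z ∈ S i
        · have hmem : ((i, z) : ℕ × ℤ) ∈ ({i} ×ˢ S i : Set (ℕ × ℤ)) :=
            Set.mem_prod.mpr ⟨rfl, hz⟩
          rw [Set.indicator_of_mem hmem, Set.indicator_of_mem hz]
        · have hmem : ((i, z) : ℕ × ℤ) ∉ ({i} ×ˢ S i : Set (ℕ × ℤ)) :=
            fun h => hz (Set.mem_prod.mp h).2
          rw [Set.indicator_of_notMem hmem, Set.indicator_of_notMem hz]
      · rw [if_neg hi]
        apply Summable.tsum_eq_zero_iff ENNReal.summable |>.mpr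
        intro z
        exact Set.indicator_of_notMem (fun h => hi (by simpa using (Set.mem_prod.mp h).1)) _
    rw [tsum_congr h3, tsum_ite_eq]
end

section
/- There exists a probability measure μ on the measurable space (ℕ, P(ℕ)) (where P(ℕ) is the σ-algebra of all subsets of ℕ) such that (ℕ, P(ℕ), μ) is conditionally partitionable: there exists a sequence (b_n)_{n∈ℕ} of strictly positive real numbers such that for every sequence (a_n)_{n∈ℕ} of nonnegative real numbers with a_n ≤ b_n for all n, there exists a sequence (A_n)_{n∈ℕ} of pairwise disjoint subsets of ℕ with μ(A_n) = a_n for all n. -/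
open MeasureTheory
open scoped ENNReal

/-- A measure space is conditionally partitionable if there is a sequence of strictly
positive reals `b` such that every sequence of nonnegative reals dominated by `b` is
attained as the measures of a sequence of pairwise disjoint measurable sets. -/
def CondPartitionable {Ω : Type*} [MeasurableSpace Ω] (μ : Measure Ω) : Prop :=
  ∃ b : ℕ → ℝ, (∀ n, 0 < b n) ∧
    ∀ a : ℕ → ℝ, (∀ n, 0 ≤ a n) → (∀ n, a n ≤ b n) → ∃ A : ℕ → Set Ω,
      (∀ n, MeasurableSet (A n)) ∧ (∀ m n, m ≠ n → Disjoint (A m) (A n)) ∧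
      ∀ n, μ (A n) = ENNReal.ofReal (a n)


noncomputable def gw (k : ℕ) : ℝ := (2:ℝ)⁻¹ ^ (k+1)

noncomputable def gp (t : ℝ) : ℕ → ℝ
  | 0 => 0
  | (k+1) => if gp t k + gw k ≤ t then gp t k + gw k else gp t k

lemma gw_pos (k : ℕ) : 0 < gw k := by unfold gw; positivity

lemma gp_le (t : ℝ) (ht : 0 ≤ t) : ∀ n, gp t n ≤ t := by
  intro n
  induction n with
  | zero => simpa [gp]
  | succ k ih =>
    by_cases h : gp t k + gw k ≤ t <;> simp [gp, h, ih]

lemma gp_ge (t : ℝ) (ht : t ≤ 1) : ∀ n, t - (2:ℝ)⁻¹ ^ n ≤ gp t n := by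
  intro n
  induction n with
  | zero => simpa [gp]
  | succ k ih =>
    by_cases h : gp t k + gw k ≤ t
    · simp only [gp, if_pos h]
      unfold gw at *
      have hpk : (2:ℝ)⁻¹ ^ (k+1) = (2:ℝ)⁻¹ ^ k * 2⁻¹ := pow_succ _ _
      nlinarith [pow_pos (by norm_num : (0:ℝ) < 2⁻¹) k]
    · simp only [gp, if_neg h]
      push_neg at h
      have : gw k = (2:ℝ)⁻¹ ^ (k+1) := rfl
      linarith

lemma gp_partial (t : ℝ) (n : ℕ) :
    ∑ i ∈ Finset.range n, Set.indicator {k | gp t k + gw k ≤ t} gw i = gp t n := by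
  induction n with
  | zero => simp [gp]
  | succ k ih =>
    rw [Finset.sum_range_succ, ih]
    by_cases h : gp t k + gw k ≤ t
    · simp [Set.indicator_apply, Set.mem_setOf_eq, h, gp]
    · simp [Set.indicator_apply, Set.mem_setOf_eq, h, gp]

lemma exists_subsum (t : ℝ) (ht0 : 0 ≤ t) (ht1 : t ≤ 1) :
    ∃ S : Set ℕ, HasSum (S.indicator gw) t := by
  refine ⟨{k | gp t k + gw k ≤ t}, ?_⟩
  rw [hasSum_iff_tendsto_nat_of_nonneg (fun i => Set.indicator_nonneg (fun k _ => (gw_pos k).le) i)]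
  simp only [gp_partial]
  have h1 : Filter.Tendsto (fun n : ℕ => t - (2:ℝ)⁻¹ ^ n) Filter.atTop (nhds (t - 0)) := by
    exact Filter.Tendsto.const_sub t (tendsto_pow_atTop_nhds_zero_of_lt_one (by norm_num) (by norm_num))
  rw [sub_zero] at h1
  exact tendsto_of_tendsto_of_tendsto_of_le_of_le h1 tendsto_const_nhds
    (fun n => gp_ge t ht1 n) (fun n => gp_le t ht0 n)

noncomputable def W (i : ℕ) : ℝ≥0∞ :=
  (2:ℝ≥0∞)⁻¹ ^ ((Nat.pairEquiv.symm i).1 + 1) * (2:ℝ≥0∞)⁻¹ ^ ((Nat.pairEquiv.symm i).2 + 1)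

noncomputable def mymu : Measure ℕ := Measure.sum fun i => W i • Measure.dirac i

lemma mymu_apply (A : Set ℕ) : mymu A = ∑' i, A.indicator W i := by
  rw [mymu, Measure.sum_apply _ (MeasurableSet.of_discrete)]
  refine tsum_congr fun i => ?_
  rw [Measure.smul_apply, Measure.dirac_apply, smul_eq_mul]
  by_cases h : i ∈ A <;> simp [h]

lemma geom_half : ∑' k : ℕ, (2:ℝ≥0∞)⁻¹ ^ (k+1) = 1 := by
  simp only [pow_succ']
  rw [ENNReal.tsum_mul_left, ENNReal.tsum_geometric, ENNReal.one_sub_inv_two, inv_inv,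
    ENNReal.inv_mul_cancel two_ne_zero ENNReal.ofNat_ne_top]

lemma W_pair (p : ℕ × ℕ) : W (Nat.pairEquiv p) = (2:ℝ≥0∞)⁻¹ ^ (p.1+1) * (2:ℝ≥0∞)⁻¹ ^ (p.2+1) := by
  simp [W, Nat.pairEquiv, Function.uncurry, Nat.unpair_pair]

instance : IsProbabilityMeasure mymu := by
  constructor
  rw [mymu_apply, Set.indicator_univ, ← Nat.pairEquiv.tsum_eq W]
  simp only [W_pair]
  rw [ENNReal.tsum_prod']
  simp only [ENNReal.tsum_mul_left, geom_half, mul_one]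

lemma ofReal_gw (k : ℕ) : ENNReal.ofReal (gw k) = (2:ℝ≥0∞)⁻¹ ^ (k+1) := by
  rw [gw, ENNReal.ofReal_pow (by norm_num), ENNReal.ofReal_inv_of_pos (by norm_num),
    ENNReal.ofReal_ofNat]

theorem exists_condPartitionable_probability_measure_on_nat :
    ∃ μ : Measure ℕ, IsProbabilityMeasure μ ∧ CondPartitionable μ := by
  classical
  refine ⟨mymu, inferInstance, gw, gw_pos, fun a ha0 hab => ?_⟩
  set t : ℕ → ℝ := fun n => a n * 2 ^ (n+1) with ht
  have ht0 : ∀ n, 0 ≤ t n := fun n => mul_nonneg (ha0 n) (by positivity)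
  have ht1 : ∀ n, t n ≤ 1 := by
    intro n
    have h2 : ((2:ℝ)⁻¹) ^ (n+1) * 2 ^ (n+1) = 1 := by
      rw [← mul_pow]; norm_num
    calc t n ≤ (2:ℝ)⁻¹ ^ (n+1) * 2 ^ (n+1) := by
          rw [ht]; have := hab n; have : a n ≤ (2:ℝ)⁻¹ ^ (n+1) := hab n
          exact mul_le_mul_of_nonneg_right this (by positivity)
      _ = 1 := h2
  choose S hS using fun n => exists_subsum (t n) (ht0 n) (ht1 n)
  refine ⟨fun n => (fun k => Nat.pairEquiv (n, k)) '' S n, fun n => .of_discrete, ?_, ?_⟩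
  · intro m n hmn
    rw [Set.disjoint_left]
    rintro x ⟨k, hk, rfl⟩ ⟨l, hl, he⟩
    exact hmn (congrArg Prod.fst (Nat.pairEquiv.injective he)).symm
  · intro n
    rw [mymu_apply, ← Nat.pairEquiv.tsum_eq, ENNReal.tsum_prod']
    have hrow : ∀ m k, ((fun k => Nat.pairEquiv (n, k)) '' S n).indicator W (Nat.pairEquiv (m, k))
        = if m = n ∧ k ∈ S n then W (Nat.pairEquiv (n, k)) else 0 := by
      intro m k
      by_cases h : m = n ∧ k ∈ S n
      · obtain ⟨rfl, hk⟩ := h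
        rw [Set.indicator_of_mem (Set.mem_image_of_mem _ hk), if_pos ⟨rfl, hk⟩]
      · rw [if_neg h, Set.indicator_of_notMem]
        rintro ⟨l, hl, he⟩
        have heq := Nat.pairEquiv.injective he
        rw [Prod.mk.injEq] at heq
        exact h ⟨heq.1.symm, heq.2 ▸ hl⟩
    calc (∑' (m : ℕ) (k : ℕ), ((fun k => Nat.pairEquiv (n, k)) '' S n).indicator W (Nat.pairEquiv (m, k)))
        = ∑' k, ((fun k => Nat.pairEquiv (n, k)) '' S n).indicator W (Nat.pairEquiv (n, k)) := by
          refine tsum_eq_single n fun m hmn => ?_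
          simp only [hrow]
          refine ENNReal.summable.tsum_eq_zero_iff |>.mpr fun k => ?_
          rw [if_neg (fun h => hmn h.1)]
      _ = ∑' k, (2:ℝ≥0∞)⁻¹ ^ (n+1) * (S n).indicator (fun k => ENNReal.ofReal (gw k)) k := by
          refine tsum_congr fun k => ?_
          rw [hrow]
          by_cases hk : k ∈ S n
          · rw [if_pos ⟨rfl, hk⟩, Set.indicator_of_mem hk, W_pair, ofReal_gw]
          · rw [if_neg (fun h => hk h.2), Set.indicator_of_notMem hk, mul_zero]
      _ = (2:ℝ≥0∞)⁻¹ ^ (n+1) * ∑' k, (S n).indicator (fun k => ENNReal.ofReal (gw k)) k :=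
          ENNReal.tsum_mul_left
      _ = (2:ℝ≥0∞)⁻¹ ^ (n+1) * ENNReal.ofReal (t n) := by
          congr 1
          have : ∀ k, (S n).indicator (fun k => ENNReal.ofReal (gw k)) k
              = ENNReal.ofReal ((S n).indicator gw k) := by
            intro k
            by_cases hk : k ∈ S n <;> simp [hk]
          simp only [this]
          rw [← ENNReal.ofReal_tsum_of_nonneg
            (fun k => Set.indicator_nonneg (fun i _ => (gw_pos i).le) k) (hS n).summable,
            (hS n).tsum_eq]
      _ = ENNReal.ofReal (a n) := by
          rw [← ofReal_gw, ← ENNReal.ofReal_mul (gw_pos n).le]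
          congr 1
          rw [gw, ht]
          field_simp
          rw [mul_right_comm, ← mul_pow]; norm_num
end
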